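/- Let M ∈ ℝ^{n×n} be symmetric with eigenvalues λ₁ ≥ ⋯ ≥ λ_n, let 1 ≤ p ≤ q ≤ n, and let x be a unit vector with μ = xᵀMx ∈ [λ_q, λ_p]. Define δ_{p,q}(μ) = min{|λ_k − μ| : k < p or k > q} (which equals min(μ − λ_{q+1}, λ_{p−1} − μ) when both exterior eigenvalues exist) and let X_p^q be the direct sum of the eigenspaces of λ_p, λ_{p+1}, …, λ_q. If the eigenresidual ε = ‖Mx − μx‖₂ satisfies ε ≤ δ_{p,q}(μ), then there exists a unit vector v ∈ X_p^q with ‖x − v‖₂ ≤ √2 · ε/δ_{p,q}(μ). -/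

import Mathlib

open Matrix

/-- Euclidean 2-norm of a finitely-indexed real vector. -/
noncomputable def enorm2 {ι : Type*} [Fintype ι] (x : ι → ℝ) : ℝ :=
  Real.sqrt (∑ i, x i ^ 2)

/-- Let `M` be symmetric with eigenvalues `λ₁ ≥ ⋯ ≥ λ_n`
(encoded by an antitone listing `lam` together with an orthonormal eigenbasis `v`),
let `p ≤ q`, and let `x` be a unit vector with Rayleigh quotient
`μ = xᵀMx ∈ [λ_q, λ_p]`.  With `δ = min{|λ_k − μ| : k < p ∨ k > q}` (the exterior
index set being nonempty) and `X_p^q` the sum of the eigenspaces of `λ_p, …, λ_q`,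
if the eigenresidual `ε = ‖Mx − μx‖₂` satisfies `ε ≤ δ`, then there is a unit
vector `v ∈ X_p^q` with `‖x − v‖₂ ≤ √2 · ε / δ`. -/
theorem blend_error_bound
    {n : ℕ} (M : Matrix (Fin n) (Fin n) ℝ) (hM : M.IsSymm)
    (lam : Fin n → ℝ) (hmono : Antitone lam)
    (v : Fin n → Fin n → ℝ)
    (hortho : ∀ i j, v i ⬝ᵥ v j = if i = j then (1 : ℝ) else 0)
    (heig : ∀ i, M.mulVec (v i) = lam i • v i)
    (p q : Fin n) (hpq : p ≤ q)
    (x : Fin n → ℝ) (hx : enorm2 x = 1)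
    (μ : ℝ) (hμ : μ = x ⬝ᵥ M.mulVec x)
    (hμmem : lam q ≤ μ ∧ μ ≤ lam p)
    (hne : ∃ k : Fin n, k < p ∨ q < k)
    (δ : ℝ)
    (hδ : IsLeast {r : ℝ | ∃ k : Fin n, (k < p ∨ q < k) ∧ r = |lam k - μ|} δ)
    (ε : ℝ) (hε : ε = enorm2 (M.mulVec x - μ • x))
    (hεδ : ε ≤ δ) :
    ∃ w : Fin n → ℝ,
      w ∈ (⨆ j ∈ Finset.Icc p q, Module.End.eigenspace (Matrix.mulVecLin M) (lam j)) ∧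
      enorm2 w = 1 ∧ enorm2 (x - w) ≤ Real.sqrt 2 * ε / δ := by
  classical
  have hdotself : ∀ z : Fin n → ℝ, z ⬝ᵥ z = ∑ i, z i ^ 2 := by
    intro z; simp [dotProduct, sq]
  have henorm : ∀ z : Fin n → ℝ, enorm2 z = Real.sqrt (z ⬝ᵥ z) := by
    intro z; rw [enorm2, hdotself]
  set V : Matrix (Fin n) (Fin n) ℝ := Matrix.of v with hV
  have hVVT : V * Vᵀ = 1 := by
    ext i j
    simpa [hV, Matrix.mul_apply, Matrix.one_apply, dotProduct] using hortho i j
  have hVTV : Vᵀ * V = 1 := mul_eq_one_comm.mp hVVT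
  have hexp : ∀ z : Fin n → ℝ, ∑ i, (z ⬝ᵥ v i) • v i = z := by
    intro z
    have h : Vᵀ *ᵥ (V *ᵥ z) = z := by
      rw [Matrix.mulVec_mulVec, hVTV, Matrix.one_mulVec]
    calc ∑ i, (z ⬝ᵥ v i) • v i = Vᵀ *ᵥ (V *ᵥ z) := by
          funext j
          simp only [Finset.sum_apply, Pi.smul_apply, smul_eq_mul, Matrix.mulVec,
            dotProduct, Matrix.transpose_apply, Matrix.of_apply, hV]
          refine Finset.sum_congr rfl fun i _ => ?_
          rw [mul_comm]
          congr 1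
          exact Finset.sum_congr rfl fun k _ => mul_comm _ _
      _ = z := h
  have hpar : ∀ a b : Fin n → ℝ,
      (∑ i, a i • v i) ⬝ᵥ (∑ j, b j • v j) = ∑ i, a i * b i := by
    intro a b
    have key2 : ∀ i j, ∑ k, (a i * v i k) * (b j * v j k) = a i * b j * (v i ⬝ᵥ v j) := by
      intro i j
      rw [dotProduct, Finset.mul_sum]
      exact Finset.sum_congr rfl fun k _ => by ring
    simp only [dotProduct, Finset.sum_apply, Pi.smul_apply, smul_eq_mul]
    calc ∑ k, (∑ i, a i * v i k) * (∑ j, b j * v j k)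
        = ∑ k, ∑ i, ∑ j, (a i * v i k) * (b j * v j k) := by
          refine Finset.sum_congr rfl fun k _ => ?_
          rw [Finset.sum_mul]
          exact Finset.sum_congr rfl fun i _ => by rw [Finset.mul_sum]
      _ = ∑ i, ∑ j, ∑ k, (a i * v i k) * (b j * v j k) := by
          rw [Finset.sum_comm]
          exact Finset.sum_congr rfl fun i _ => Finset.sum_comm
      _ = ∑ i, ∑ j, a i * b j * (v i ⬝ᵥ v j) :=
          Finset.sum_congr rfl fun i _ => Finset.sum_congr rfl fun j _ => key2 i j
      _ = ∑ i, a i * b i := by simp [hortho, mul_ite]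
  have hnormcomb : ∀ a : Fin n → ℝ,
      enorm2 (∑ i, a i • v i) = Real.sqrt (∑ i, a i ^ 2) := by
    intro a
    rw [henorm, hpar]
    congr 1
    exact Finset.sum_congr rfl fun i _ => (sq (a i)).symm
  set c : Fin n → ℝ := fun i => x ⬝ᵥ v i with hc
  have hxc : x = ∑ i, c i • v i := (hexp x).symm
  have hsum1 : ∑ i, c i ^ 2 = 1 := by
    have hxx : x ⬝ᵥ x = ∑ i, c i ^ 2 := by
      calc x ⬝ᵥ x = (∑ i, c i • v i) ⬝ᵥ (∑ i, c i • v i) := by rw [← hxc]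
        _ = ∑ i, c i * c i := hpar c c
        _ = ∑ i, c i ^ 2 := Finset.sum_congr rfl fun i _ => (sq (c i)).symm
    rw [← hxx]
    have := hx
    rw [henorm] at this
    have h0 : 0 ≤ x ⬝ᵥ x := by rw [hdotself]; positivity
    nlinarith [Real.sq_sqrt h0, this]
  have hMx : M *ᵥ x = ∑ i, (lam i * c i) • v i := by
    conv_lhs => rw [hxc]
    rw [show M *ᵥ (∑ i, c i • v i) = M.mulVecLin (∑ i, c i • v i) from rfl, map_sum]
    refine Finset.sum_congr rfl fun i _ => ?_
    rw [_root_.map_smul, Matrix.mulVecLin_apply, heig i, smul_smul, mul_comm]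
  have hres : M *ᵥ x - μ • x = ∑ i, ((lam i - μ) * c i) • v i := by
    rw [hMx]
    conv_lhs => rw [hxc]
    rw [Finset.smul_sum, ← Finset.sum_sub_distrib]
    refine Finset.sum_congr rfl fun i _ => ?_
    rw [smul_smul, ← sub_smul]
    ring_nf
  have hε2 : ε ^ 2 = ∑ i, ((lam i - μ) * c i) ^ 2 := by
    rw [hε, show M.mulVec x - μ • x = M *ᵥ x - μ • x from rfl, hres, hnormcomb]
    rw [Real.sq_sqrt (by positivity)]
  have hδ0 : 0 ≤ δ := by
    obtain ⟨k, _, hkeq⟩ := hδ.1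
    rw [hkeq]; exact abs_nonneg _
  have hε0 : 0 ≤ ε := by rw [hε, enorm2]; exact Real.sqrt_nonneg _
  have heigmem : ∀ i, v i ∈ Module.End.eigenspace (Matrix.mulVecLin M) (lam i) := by
    intro i
    rw [Module.End.mem_eigenspace_iff, Matrix.mulVecLin_apply, heig i]
  have key : ∀ j ∈ Finset.Icc p q, ∀ z : Fin n → ℝ,
      z ∈ Module.End.eigenspace (Matrix.mulVecLin M) (lam j) →
      z ∈ ⨆ j ∈ Finset.Icc p q, Module.End.eigenspace (Matrix.mulVecLin M) (lam j) :=
    fun j hj z hz => Submodule.mem_iSup_of_mem j (Submodule.mem_iSup_of_mem hj hz)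
  rcases eq_or_lt_of_le hδ0 with hδz | hδpos
  · -- δ = 0 : residual is zero, x itself lies in the eigenspace sum
    have hεz : ε = 0 := le_antisymm (hδz ▸ hεδ) hε0
    have hzero : ∀ i, (lam i - μ) * c i = 0 := by
      intro i
      have hsq : ∑ j, ((lam j - μ) * c j) ^ 2 = 0 := by rw [← hε2, hεz]; ring
      have := (Finset.sum_eq_zero_iff_of_nonneg
        (fun j _ => sq_nonneg ((lam j - μ) * c j))).mp hsq i (Finset.mem_univ i)
      exact (pow_eq_zero_iff two_ne_zero).mp this
    refine ⟨x, ?_, hx, ?_⟩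
    · rw [hxc]
      refine Submodule.sum_mem _ fun i _ => ?_
      by_cases hci : c i = 0
      · rw [hci, zero_smul]; exact Submodule.zero_mem _
      · have hli : lam i = μ := by
          have := hzero i
          rcases mul_eq_zero.mp this with h | h
          · linarith [sub_eq_zero.mp h]
          · exact absurd h hci
        by_cases hip : i < p
        · have h1 : lam p = lam i := le_antisymm
            (hmono hip.le) (by rw [hli]; exact hμmem.2)
          refine key p (Finset.mem_Icc.mpr ⟨le_refl p, hpq⟩) _ ?_
          refine Submodule.smul_mem _ _ ?_
          rw [h1]; exact heigmem i
        · by_cases hiq : q < i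
          · have h1 : lam q = lam i := le_antisymm
              (by rw [hli]; exact hμmem.1) (hmono hiq.le)
            refine key q (Finset.mem_Icc.mpr ⟨hpq, le_refl q⟩) _ ?_
            refine Submodule.smul_mem _ _ ?_
            rw [h1]; exact heigmem i
          · exact key i (Finset.mem_Icc.mpr ⟨not_lt.mp hip, not_lt.mp hiq⟩) _
              (Submodule.smul_mem _ _ (heigmem i))
    · have : x - x = 0 := sub_self x
      rw [this, hεz]
      simp [enorm2]
  · -- δ > 0
    set S : Finset (Fin n) := Finset.Icc p q with hS
    set s : ℝ := ∑ i ∈ S, c i ^ 2 with hsdef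
    set t : ℝ := ∑ i ∈ Sᶜ, c i ^ 2 with htdef
    have hs0 : 0 ≤ s := Finset.sum_nonneg fun i _ => sq_nonneg _
    have ht0 : 0 ≤ t := Finset.sum_nonneg fun i _ => sq_nonneg _
    have hst : s + t = 1 := by
      rw [hsdef, htdef, Finset.sum_add_sum_compl, hsum1]
    have hext : ∀ i, i ∉ S → δ ≤ |lam i - μ| := by
      intro i hi
      rw [hS, Finset.mem_Icc, not_and_or] at hi
      refine hδ.2 ⟨i, ?_, rfl⟩
      rcases hi with h | h
      · exact Or.inl (lt_of_not_ge h)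
      · exact Or.inr (lt_of_not_ge h)
    have ht : δ ^ 2 * t ≤ ε ^ 2 := by
      have h1 : δ ^ 2 * t = ∑ i ∈ Sᶜ, δ ^ 2 * c i ^ 2 := by
        rw [htdef, Finset.mul_sum]
      have h2 : ∀ i ∈ Sᶜ, δ ^ 2 * c i ^ 2 ≤ ((lam i - μ) * c i) ^ 2 := by
        intro i hi
        rw [mul_pow]
        refine mul_le_mul_of_nonneg_right ?_ (sq_nonneg _)
        have := hext i (Finset.mem_compl.mp hi)
        calc δ ^ 2 ≤ |lam i - μ| ^ 2 := by
              exact pow_le_pow_left₀ hδ0 this 2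
          _ = (lam i - μ) ^ 2 := sq_abs _
      calc δ ^ 2 * t = ∑ i ∈ Sᶜ, δ ^ 2 * c i ^ 2 := h1
        _ ≤ ∑ i ∈ Sᶜ, ((lam i - μ) * c i) ^ 2 := Finset.sum_le_sum h2
        _ ≤ ∑ i, ((lam i - μ) * c i) ^ 2 :=
            Finset.sum_le_sum_of_subset_of_nonneg (Finset.subset_univ _)
              (fun i _ _ => sq_nonneg _)
        _ = ε ^ 2 := hε2.symm
    have hpS : p ∈ S := Finset.mem_Icc.mpr ⟨le_refl p, hpq⟩
    rcases eq_or_lt_of_le hs0 with hsz | hspos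
    · -- s = 0 : take w = v p ;  it forces ε = δ and the bound is √2
      have hcp : c p = 0 := by
        have := (Finset.sum_eq_zero_iff_of_nonneg
          (fun j (_ : j ∈ S) => sq_nonneg (c j))).mp hsz.symm p hpS
        exact (pow_eq_zero_iff two_ne_zero).mp this
      have htone : t = 1 := by linarith
      have hδε : δ ≤ ε := by
        have : δ ^ 2 ≤ ε ^ 2 := by rw [← mul_one (δ ^ 2), ← htone] at *; linarith [ht]
        exact le_of_pow_le_pow_left₀ two_ne_zero hε0 this
      have hεeq : ε = δ := le_antisymm hεδ hδε
      refine ⟨v p, key p hpS _ (heigmem p), ?_, ?_⟩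
      · rw [henorm, hortho p p]
        simp
      · have hvp : v p = ∑ i, (if i = p then (1:ℝ) else 0) • v i := by
          symm
          simp [ite_smul]
        have hsub : x - v p = ∑ i, (c i - if i = p then (1:ℝ) else 0) • v i := by
          conv_lhs => rw [hxc, hvp]
          rw [← Finset.sum_sub_distrib]
          exact Finset.sum_congr rfl fun i _ => (sub_smul _ _ _).symm
        rw [hsub, hnormcomb]
        have hsum2 : ∑ i, (c i - if i = p then (1:ℝ) else 0) ^ 2 = 2 := by
          have expand : ∀ i, (c i - (if i = p then (1:ℝ) else 0)) ^ 2
              = c i ^ 2 - 2 * (if i = p then c i else 0) + (if i = p then (1:ℝ) else 0) := by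
            intro i; by_cases h : i = p <;> simp [h] <;> norm_num <;> ring_nf
          rw [Finset.sum_congr rfl fun i _ => expand i]
          rw [Finset.sum_add_distrib, Finset.sum_sub_distrib, hsum1, ← Finset.mul_sum]
          simp [Finset.sum_ite_eq', hcp]
          norm_num
        rw [hsum2, hεeq]
        rw [show Real.sqrt 2 * δ / δ = Real.sqrt 2 from by field_simp]
    · -- s > 0 : take w = (1/√s) Σ_{i∈S} c_i v_i
      set r : ℝ := Real.sqrt s with hrdef
      have hr0 : 0 < r := Real.sqrt_pos.mpr hspos
      have hr2 : r ^ 2 = s := Real.sq_sqrt hs0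
      have hs1 : s ≤ 1 := by linarith
      have hr1 : r ≤ 1 := by nlinarith
      set a : Fin n → ℝ := fun i => if i ∈ S then c i / r else 0 with hadef
      refine ⟨∑ i, a i • v i, ?_, ?_, ?_⟩
      · refine Submodule.sum_mem _ fun i _ => ?_
        by_cases hi : i ∈ S
        · exact key i hi _ (Submodule.smul_mem _ _ (heigmem i))
        · rw [hadef]; simp only [hi, if_false, zero_smul]; exact Submodule.zero_mem _
      · rw [hnormcomb]
        have : ∑ i, a i ^ 2 = 1 := by
          have h1 : ∑ i, a i ^ 2 = ∑ i ∈ S, c i ^ 2 / r ^ 2 := by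
            rw [hadef]
            rw [Finset.sum_congr rfl fun i (_ : i ∈ Finset.univ) =>
              apply_ite (· ^ 2) (i ∈ S) (c i / r) 0]
            simp [Finset.sum_ite_mem, div_pow]
          rw [h1, ← Finset.sum_div, hr2, ← hsdef, div_self (ne_of_gt hspos)]
        rw [this, Real.sqrt_one]
      · have hsub : x - (∑ i, a i • v i) = ∑ i, (c i - a i) • v i := by
          conv_lhs => rw [hxc]
          rw [← Finset.sum_sub_distrib]
          exact Finset.sum_congr rfl fun i _ => (sub_smul _ _ _).symm
        rw [hsub, hnormcomb]
        have hca : ∑ i, c i * a i = r := by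
          have h1 : ∑ i, c i * a i = ∑ i ∈ S, c i ^ 2 / r := by
            rw [hadef]
            rw [Finset.sum_congr rfl fun i (_ : i ∈ Finset.univ) => by
              show c i * (if i ∈ S then c i / r else 0) = if i ∈ S then c i ^ 2 / r else 0
              by_cases h : i ∈ S <;> simp [h] <;> ring]
            simp [Finset.sum_ite_mem]
          rw [h1, ← Finset.sum_div, ← hsdef, ← hr2]
          field_simp
        have ha2 : ∑ i, a i ^ 2 = 1 := by
          have h1 : ∑ i, a i ^ 2 = ∑ i ∈ S, c i ^ 2 / r ^ 2 := by
            rw [hadef]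
            rw [Finset.sum_congr rfl fun i (_ : i ∈ Finset.univ) =>
              apply_ite (· ^ 2) (i ∈ S) (c i / r) 0]
            simp [Finset.sum_ite_mem, div_pow]
          rw [h1, ← Finset.sum_div, hr2, ← hsdef, div_self (ne_of_gt hspos)]
        have hsum2 : ∑ i, (c i - a i) ^ 2 = 2 - 2 * r := by
          have expand : ∀ i, (c i - a i) ^ 2 = c i ^ 2 - 2 * (c i * a i) + a i ^ 2 := by
            intro i; ring
          rw [Finset.sum_congr rfl fun i _ => expand i]
          rw [Finset.sum_add_distrib, Finset.sum_sub_distrib, hsum1, ha2, ← Finset.mul_sum, hca]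
          ring
        rw [hsum2]
        have hkey : 2 - 2 * r ≤ 2 * ε ^ 2 / δ ^ 2 := by
          have h2t : 2 - 2 * r ≤ 2 * t := by nlinarith
          have : t ≤ ε ^ 2 / δ ^ 2 := by
            rw [le_div_iff₀ (pow_pos hδpos 2)]
            linarith [ht]
          rw [mul_div_assoc]
          linarith
        calc Real.sqrt (2 - 2 * r) ≤ Real.sqrt (2 * ε ^ 2 / δ ^ 2) := Real.sqrt_le_sqrt hkey
          _ = Real.sqrt 2 * ε / δ := by
              have h2 : (2 : ℝ) * ε ^ 2 / δ ^ 2 = (Real.sqrt 2 * ε / δ) ^ 2 := by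
                rw [div_pow, mul_pow, Real.sq_sqrt (by norm_num : (0:ℝ) ≤ 2)]
              rw [h2, Real.sqrt_sq (div_nonneg (mul_nonneg (Real.sqrt_nonneg 2) hε0) hδ0)]
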